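/- Let z be a nonzero complex number with nonnegative real part and |z| ≤ ρ for some ρ > 0, and let ℓ ≥ 6 be an even integer not divisible by four. Then Re(z^ℓ) < ℓ·ρ^(ℓ-1)·Re(z). -/

import Mathlib

theorem stmt_1 (z : ℂ) (hz : z ≠ 0) (ρ : ℝ) (ℓ : ℕ) (hℓ : 6 ≤ ℓ)
    (heven : Even ℓ) (hndiv : ¬ (4 ∣ ℓ))
    (hρ : 0 < ρ) (hre : 0 ≤ z.re) (habs : ‖z‖ ≤ ρ) :
    (z ^ ℓ).re < ℓ * ρ ^ (ℓ - 1) * z.re := by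
  set x := z.re with hx
  set y := z.im with hy
  obtain ⟨m, hm⟩ := heven
  have hmodd : Odd m := by
    rcases Nat.even_or_odd m with ⟨k, hk⟩ | ho
    · exact absurd ⟨k, by omega⟩ hndiv
    · exact ho
  have hiℓ : (Complex.I) ^ ℓ = -1 := by
    have h2 : ℓ = 2 * m := by omega
    rw [h2, pow_mul, Complex.I_sq, hmodd.neg_one_pow]
  have hρpow : 0 < ρ ^ (ℓ - 1) := pow_pos hρ _
  rcases eq_or_ne y 0 with hy0 | hy0
  · -- z is real, positive
    have hzx : z = (x : ℂ) := Complex.ext rfl hy0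
    have hxpos : 0 < x := lt_of_le_of_ne hre (by
      intro h
      exact hz (by rw [hzx, ← h]; simp))
    have hxρ : x ≤ ρ := by
      have := Complex.abs_re_le_norm z
      rw [abs_of_nonneg hre] at this
      exact this.trans habs
    have hre' : (z ^ ℓ).re = x ^ ℓ := by
      rw [hzx, ← Complex.ofReal_pow, Complex.ofReal_re]
    rw [hre']
    have h1 : x ^ ℓ = x ^ (ℓ - 1) * x := by
      rw [← pow_succ]; congr 1; omega
    have h2 : x ^ (ℓ - 1) ≤ ρ ^ (ℓ - 1) := pow_le_pow_left₀ hxpos.le hxρ _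
    have h3 : (1 : ℝ) < (ℓ : ℝ) := by exact_mod_cast by omega
    nlinarith [mul_pos hρpow hxpos]
  · -- general case
    set w : ℂ := (y : ℝ) * Complex.I with hw
    have hzw : z = (x : ℂ) + w := by
      apply Complex.ext <;> simp [hw, hx, hy]
    have hwabs : ‖w‖ ≤ ρ := by
      have : ‖w‖ = |y| := by simp [hw]
      rw [this]
      exact (Complex.abs_im_le_norm z).trans habs
    have hwℓ : (w ^ ℓ).re = -(y ^ ℓ) := by
      rw [hw, mul_pow, hiℓ]
      simp [← Complex.ofReal_pow]
    set s : ℂ := ∑ i ∈ Finset.range ℓ, z ^ i * w ^ (ℓ - 1 - i) with hs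
    have key : z ^ ℓ - w ^ ℓ = s * (x : ℂ) := by
      have h := geom_sum₂_mul z w ℓ
      rw [← h]
      congr 1
      rw [hzw]; ring
    have habs_s : ‖s‖ ≤ ℓ * ρ ^ (ℓ - 1) := by
      calc ‖s‖ ≤ ∑ i ∈ Finset.range ℓ, ‖z ^ i * w ^ (ℓ - 1 - i)‖ :=
            norm_sum_le _ _
        _ ≤ ∑ i ∈ Finset.range ℓ, ρ ^ (ℓ - 1) := by
            apply Finset.sum_le_sum
            intro i hi
            rw [norm_mul, norm_pow, norm_pow]
            have h1 : ‖z‖ ^ i ≤ ρ ^ i :=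
              pow_le_pow_left₀ (norm_nonneg z) habs i
            have h2 : ‖w‖ ^ (ℓ - 1 - i) ≤ ρ ^ (ℓ - 1 - i) :=
              pow_le_pow_left₀ (norm_nonneg w) hwabs _
            calc ‖z‖ ^ i * ‖w‖ ^ (ℓ - 1 - i) ≤ ρ ^ i * ρ ^ (ℓ - 1 - i) :=
                  mul_le_mul h1 h2 (by positivity) (by positivity)
              _ = ρ ^ (ℓ - 1) := by
                  rw [← pow_add]; congr 1
                  have := Finset.mem_range.mp hi
                  omega
        _ = ℓ * ρ ^ (ℓ - 1) := by
            rw [Finset.sum_const, Finset.card_range, nsmul_eq_mul]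
    have hre_eq : (z ^ ℓ).re = -(y ^ ℓ) + s.re * x := by
      have : z ^ ℓ = w ^ ℓ + s * (x : ℂ) := by rw [← key]; ring
      rw [this, Complex.add_re, hwℓ, Complex.mul_re, Complex.ofReal_re, Complex.ofReal_im]
      ring
    have hsx : s.re * x ≤ ℓ * ρ ^ (ℓ - 1) * x :=
      mul_le_mul_of_nonneg_right ((Complex.re_le_norm s).trans habs_s) hre
    have hypos : 0 < y ^ ℓ := by
      have : ℓ = 2 * m := by omega
      rw [this, pow_mul]
      positivity
    rw [hre_eq]
    linarith
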